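/- Define polynomials Aₙ(t) by the recurrence A_{n+1}(t) = (1 + n(t−1))Aₙ(t) + t(2−t)Aₙ′(t) with A₁(t) = 1, and polynomials Rₘ(x) by R_{m+1}(x) = (1 + mx)Rₘ(x) + x(1−2x)Rₘ′(x) with R₀(x) = 1. Then Aₙ(t) = t^{n−1}R_{n−1}(1/t) for all n ≥ 1; equivalently, the coefficient of t^{n−1−d} in Aₙ equals the coefficient of x^d in R_{n−1}. -/

import Mathlib

open Polynomial


lemma refl_refl (N : ℕ) (f : ℚ[X]) : reflect N (reflect N f) = f := by
  ext i; simp [coeff_reflect, revAt_invol]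

lemma natDegree_reflect_le' (m : ℕ) (P : ℚ[X]) (hP : P.natDegree ≤ m) :
    (reflect m P).natDegree ≤ m := by
  rw [natDegree_le_iff_coeff_eq_zero]
  intro i hi
  rw [coeff_reflect, revAt_eq_self_of_lt hi]
  exact coeff_eq_zero_of_natDegree_lt (lt_of_le_of_lt hP hi)

lemma refl_deriv (m : ℕ) (P : ℚ[X]) (hP : P.natDegree ≤ m + 1) :
    reflect m (derivative (reflect (m + 1) P))
      = C ((m : ℚ) + 1) * P - X * derivative P := by
  have hz : ∀ j, m + 1 < j → P.coeff j = 0 := fun j hj =>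
    coeff_eq_zero_of_natDegree_lt (lt_of_le_of_lt hP hj)
  ext j
  simp only [coeff_reflect, coeff_derivative, coeff_sub, coeff_C_mul]
  rcases Nat.lt_or_ge m j with hj | hj
  · rw [revAt_eq_self_of_lt hj, revAt_eq_self_of_lt (by omega)]
    obtain ⟨j', rfl⟩ := Nat.exists_eq_add_of_lt hj
    rw [coeff_X_mul, coeff_derivative]
    rcases Nat.eq_zero_or_pos j' with h | h
    · subst h
      rw [hz _ (by omega)]
      push_cast; ring
    · rw [hz _ (by omega), hz _ (by omega)]
      simp
  · rw [revAt_le hj, revAt_le (by omega : m - j + 1 ≤ m + 1)]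
    have h1 : m + 1 - (m - j + 1) = j := by omega
    rw [h1]
    rcases Nat.eq_zero_or_pos j with h0 | h0
    · subst h0; simp; ring
    · obtain ⟨j', rfl⟩ := Nat.exists_eq_add_of_lt h0
      rw [zero_add, coeff_X_mul, coeff_derivative]
      rw [Nat.cast_sub (by omega : j' + 1 ≤ m)]
      push_cast; ring

lemma key (m : ℕ) (P : ℚ[X]) (hP : P.natDegree ≤ m) :
    (1 + ((m + 1 : ℕ) : ℚ[X]) * (X - 1)) * reflect m P
      + X * (2 - X) * derivative (reflect m P)
    = reflect (m + 1) ((1 + (m : ℚ[X]) * X) * P + X * (1 - 2 * X) * derivative P) := by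
  rcases m with _ | m
  · rw [eq_C_of_natDegree_le_zero hP]
    simp only [Nat.cast_zero, zero_mul, zero_add, one_mul, derivative_C, mul_zero, add_zero,
      Nat.cast_one]
    rw [show reflect 0 (C (P.coeff 0)) = C (P.coeff 0) by simpa using reflect_C (P.coeff 0) 0]
    rw [reflect_C]
    simp only [derivative_C, mul_zero, add_zero]
    push_cast; ring
  · -- m+1 case
    have hP' : P.natDegree ≤ m + 1 := hP
    have hQ : (reflect (m + 1) P).natDegree ≤ m + 1 := natDegree_reflect_le' _ _ hP
    have hDQ : (derivative (reflect (m + 1) P)).natDegree ≤ m :=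
      (natDegree_derivative_le _).trans (by omega)
    have hc : (((m + 1 : ℕ) + 1 : ℕ) : ℚ[X]) * (X - 1) = ((m : ℚ[X]) + 2) * (X - 1) := by
      push_cast; ring
    rw [hc]
    have hd1 : ((1 : ℚ[X]) + ((m : ℚ[X]) + 2) * (X - 1)).natDegree ≤ 1 := by compute_degree
    have hd2 : ((X : ℚ[X]) * (2 - X)).natDegree ≤ 2 := by compute_degree
    have r1 : reflect 1 (1 + ((m : ℚ[X]) + 2) * (X - 1)) = C ((m:ℚ)+2) - C ((m:ℚ)+1) * X := by
      have h : (1 + ((m : ℚ[X]) + 2) * (X - 1)) = C (-((m:ℚ)+1)) + C ((m:ℚ)+2) * X ^ 1 := by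
        simp only [map_neg, map_add, map_ofNat, C_1, C_eq_natCast]
        ring
      rw [h, reflect_add, reflect_C, reflect_C_mul_X_pow]
      simp [revAt_le]
      ring
    have r2 : reflect 2 ((X : ℚ[X]) * (2 - X)) = C 2 * X - 1 := by
      have h : (X : ℚ[X]) * (2 - X) = C (2:ℚ) * X ^ 1 - C 1 * X ^ 2 := by
        simp only [map_ofNat, C_1]; ring
      rw [h, reflect_sub, reflect_C_mul_X_pow, reflect_C_mul_X_pow]
      simp [revAt_le]
    set Q := reflect (m + 1) P with hQdef
    set f1 : ℚ[X] := 1 + ((m : ℚ[X]) + 2) * (X - 1) with hf1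
    set S : ℚ[X] := (1 + ((m + 1 : ℕ) : ℚ[X]) * X) * P + X * (1 - 2 * X) * derivative P with hS
    suffices h : reflect (m + 1 + 1) (f1 * Q + X * (2 - X) * derivative Q) = S by
      rw [← h, refl_refl]
    have e1 : reflect (m + 1 + 1) (f1 * Q) = reflect 1 f1 * P := by
      rw [show m + 1 + 1 = 1 + (m + 1) from by omega, reflect_mul _ _ hd1 hQ, hQdef, refl_refl]
    have e2 : reflect (m + 1 + 1) (X * (2 - X) * derivative Q)
        = (C 2 * X - 1) * (C ((m:ℚ)+1) * P - X * derivative P) := by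
      rw [show m + 1 + 1 = 2 + m from by omega, reflect_mul _ _ hd2 hDQ, r2, hQdef,
        refl_deriv m P hP']
    rw [reflect_add, e1, e2, r1, hS]
    simp only [map_add, map_ofNat, C_1, C_eq_natCast]
    push_cast
    ring


/-- With `A_{n+1} = (1 + n(t-1)) Aₙ + t(2-t) Aₙ'`, `A₁ = 1`, and
`R_{m+1} = (1 + m x) Rₘ + x(1-2x) Rₘ'`, `R₀ = 1`, we have
`Aₙ(t) = t^{n-1} R_{n-1}(1/t)` for all `n ≥ 1`. -/
theorem stmt13 (A R : ℕ → Polynomial ℚ)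
    (hA1 : A 1 = 1)
    (hArec : ∀ n : ℕ, 1 ≤ n →
      A (n + 1) = (1 + (n : ℚ[X]) * (X - 1)) * A n
        + X * (2 - X) * Polynomial.derivative (A n))
    (hR0 : R 0 = 1)
    (hRrec : ∀ m : ℕ,
      R (m + 1) = (1 + (m : ℚ[X]) * X) * R m
        + X * (1 - 2 * X) * Polynomial.derivative (R m)) :
    ∀ n : ℕ, 1 ≤ n → A n = (R (n - 1)).reflect (n - 1) := by
  have degstep : ∀ (m : ℕ), (R m).natDegree ≤ m → (R (m+1)).natDegree ≤ m + 1 := by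
    intro m h
    rw [hRrec m]
    rcases Nat.eq_zero_or_pos m with hm | hm
    · subst hm
      rw [eq_C_of_natDegree_le_zero h]
      simp only [derivative_C, mul_zero, add_zero, Nat.cast_zero, zero_mul, one_mul]
      exact (natDegree_C _).le.trans (by omega)
    · have hd : (derivative (R m)).natDegree ≤ m - 1 := (natDegree_derivative_le (R m)).trans (by omega)
      compute_degree
      omega
  have main : ∀ m, A (m + 1) = reflect m (R m) ∧ (R m).natDegree ≤ m := by
    intro m
    induction m with
    | zero =>
      refine ⟨?_, by simp [hR0]⟩
      rw [hA1, hR0]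
      rw [show (1 : ℚ[X]) = C 1 from (C_1).symm]
      simpa using (reflect_C (1:ℚ) 0).symm
    | succ m ih =>
      refine ⟨?_, degstep m ih.2⟩
      rw [hArec (m+1) (by omega), ih.1, hRrec m]
      exact key m (R m) ih.2
  intro n hn
  obtain ⟨m, rfl⟩ := Nat.exists_eq_add_of_le hn
  have := (main m).1
  simpa [Nat.add_comm] using this
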